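/- Let N be a positive integer and u ∈ ZMod N with u ≠ −u. Let A be the N×N complex matrix indexed by ZMod N with A_{a,b} = 1 if b − a ∈ {u, −u} and A_{a,b} = 0 otherwise, and for h ∈ ZMod N let ψ_h : ZMod N → ℂ be ψ_h(g) = cas(2π·(g·h).val/N). Then for every real t and every h ∈ ZMod N, (Matrix.exp((i·t) • A)).mulVec ψ_h = exp(i·t·2·cos(2π·(u·h).val/N)) • ψ_h, where Matrix.exp denotes the matrix exponential and i the imaginary unit. -/

import Mathlib

open NormedSpace

/-- The `cas` function: `cas x = cos x + sin x`. -/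
noncomputable def cas (x : ℝ) : ℝ := Real.cos x + Real.sin x

/-- The adjacency matrix of the Cayley graph of `ZMod N` with connection set `{u, -u}`. -/
def cayleyAdj (N : ℕ) (u : ZMod N) : Matrix (ZMod N) (ZMod N) ℂ :=
  fun a b => if b - a ∈ ({u, -u} : Finset (ZMod N)) then 1 else 0

lemma cas_add_int_mul_two_pi (x : ℝ) (n : ℤ) : cas (x + n * (2 * Real.pi)) = cas x := by
  unfold cas
  rw [Real.cos_add_int_mul_two_pi, Real.sin_add_int_mul_two_pi]

lemma cas_identity (x θ : ℝ) : cas (x + θ) + cas (x - θ) = 2 * Real.cos θ * cas x := by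
  simp only [cas, Real.cos_add, Real.sin_add, Real.cos_sub, Real.sin_sub]
  ring

lemma angle_add (N : ℕ) [NeZero N] (a b : ZMod N) :
    ∃ k : ℤ, 2 * Real.pi * ((a + b).val : ℝ) / N =
      2 * Real.pi * (a.val : ℝ) / N + 2 * Real.pi * (b.val : ℝ) / N + k * (2 * Real.pi) := by
  set q := (a.val + b.val) / N with hq
  refine ⟨-(q : ℤ), ?_⟩
  have hN : (N : ℝ) ≠ 0 := Nat.cast_ne_zero.mpr (NeZero.ne N)
  have h3 : (a + b).val + N * q = a.val + b.val := by
    rw [ZMod.val_add, hq]; exact Nat.mod_add_div _ _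
  have h4 : ((a + b).val : ℝ) = (a.val : ℝ) + b.val - N * q := by
    have := congrArg (fun x : ℕ => (x : ℝ)) h3
    push_cast at this
    linarith
  rw [h4]
  push_cast
  field_simp
  ring

lemma angle_neg (N : ℕ) [NeZero N] (a : ZMod N) :
    ∃ k : ℤ, 2 * Real.pi * (((-a)).val : ℝ) / N =
      -(2 * Real.pi * (a.val : ℝ) / N) + k * (2 * Real.pi) := by
  obtain ⟨k, hk⟩ := angle_add N a (-a)
  refine ⟨-k, ?_⟩
  rw [add_neg_cancel, ZMod.val_zero] at hk
  push_cast at hk ⊢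
  linear_combination -hk

lemma cas_angle_add (N : ℕ) [NeZero N] (a b : ZMod N) :
    cas (2 * Real.pi * ((a + b).val : ℝ) / N) =
      cas (2 * Real.pi * (a.val : ℝ) / N + 2 * Real.pi * (b.val : ℝ) / N) := by
  obtain ⟨k, hk⟩ := angle_add N a b
  rw [hk, cas_add_int_mul_two_pi]

lemma cas_angle_sub (N : ℕ) [NeZero N] (a b : ZMod N) :
    cas (2 * Real.pi * ((a - b).val : ℝ) / N) =
      cas (2 * Real.pi * (a.val : ℝ) / N - 2 * Real.pi * (b.val : ℝ) / N) := by
  obtain ⟨k, hk⟩ := angle_add N a (-b)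
  obtain ⟨m, hm⟩ := angle_neg N b
  rw [sub_eq_add_neg, hk, hm]
  have key : 2 * Real.pi * (a.val : ℝ) / N + (-(2 * Real.pi * (b.val : ℝ) / N) + m * (2 * Real.pi)) + k * (2 * Real.pi)
      = (2 * Real.pi * (a.val : ℝ) / N - 2 * Real.pi * (b.val : ℝ) / N) + ((m + k : ℤ) : ℝ) * (2 * Real.pi) := by
    push_cast; ring
  rw [key, cas_add_int_mul_two_pi]

lemma cayley_eigen (N : ℕ) [NeZero N] (u : ZMod N) (hu : u ≠ -u) (h : ZMod N) :
    (cayleyAdj N u).mulVec (fun g => ((cas (2 * Real.pi * (g * h).val / N) : ℝ) : ℂ)) =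
      ((2 * Real.cos (2 * Real.pi * (u * h).val / N) : ℝ) : ℂ) •
        (fun g => ((cas (2 * Real.pi * (g * h).val / N) : ℝ) : ℂ)) := by
  funext g
  have key : ∀ b : ZMod N, (cayleyAdj N u g b) = if b ∈ ({g + u, g - u} : Finset (ZMod N)) then 1 else 0 := by
    intro b
    have hiff : (b - g ∈ ({u, -u} : Finset (ZMod N))) ↔ b ∈ ({g + u, g - u} : Finset (ZMod N)) := by
      simp only [Finset.mem_insert, Finset.mem_singleton]
      constructor
      · rintro (h1 | h1) <;> [left; right] <;>
        · have := congrArg (fun x => x + g) h1; simpa [sub_add_cancel, add_comm, sub_eq_add_neg] using this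
      · rintro (h1 | h1) <;> [left; right] <;> rw [h1] <;> ring
    simp [cayleyAdj, hiff]
  have hne : g + u ≠ g - u := by
    intro hgu
    apply hu
    have : g + u = g + -u := by rw [hgu]; ring
    exact add_left_cancel this
  simp only [Matrix.mulVec, dotProduct, key, ite_mul, one_mul, zero_mul]
  rw [Finset.sum_ite_mem, Finset.univ_inter, Finset.sum_pair hne]
  have hgu : (g + u) * h = g * h + u * h := by ring
  have hgu2 : (g - u) * h = g * h - u * h := by ring
  rw [hgu, hgu2]
  have e1 := cas_angle_add N (g * h) (u * h)
  have e2 := cas_angle_sub N (g * h) (u * h)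
  rw [e1, e2, ← Complex.ofReal_add, cas_identity]
  show _ = ((2 * Real.cos (2 * Real.pi * (u * h).val / N) : ℝ) : ℂ) * _
  push_cast
  ring

lemma exp_mulVec_eigen {n : Type*} [Fintype n] [DecidableEq n]
    (M : Matrix n n ℂ) (v : n → ℂ) (μ : ℂ) (hv : M.mulVec v = μ • v) :
    (exp M).mulVec v = Complex.exp μ • v := by
  letI : NormedRing (Matrix n n ℂ) := Matrix.linftyOpNormedRing
  letI : NormedAlgebra ℂ (Matrix n n ℂ) := Matrix.linftyOpNormedAlgebra
  let L : Matrix n n ℂ →L[ℂ] (n → ℂ) :=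
    LinearMap.toContinuousLinearMap
      { toFun := fun A => A.mulVec v
        map_add' := fun A B => Matrix.add_mulVec A B v
        map_smul' := fun c A => Matrix.smul_mulVec c A v }
  have hpow : ∀ k : ℕ, (M ^ k).mulVec v = μ ^ k • v := by
    intro k
    induction k with
    | zero => simp [Matrix.mulVec_one]
    | succ k ih =>
      rw [pow_succ, pow_succ, ← Matrix.mulVec_mulVec, hv, Matrix.mulVec_smul, ih, smul_smul, mul_comm]
  have hsum : Summable fun k : ℕ => ((k.factorial : ℂ))⁻¹ • M ^ k :=
    expSeries_summable' (𝕂 := ℂ) M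
  have hsum2 : Summable fun k : ℕ => ((k.factorial : ℂ))⁻¹ * μ ^ k := by
    simpa [smul_eq_mul] using expSeries_summable' (𝕂 := ℂ) μ
  calc (exp M).mulVec v = L (exp M) := rfl
    _ = L (∑' k : ℕ, ((k.factorial : ℂ))⁻¹ • M ^ k) := by rw [exp_eq_tsum ℂ]
    _ = ∑' k : ℕ, L (((k.factorial : ℂ))⁻¹ • M ^ k) := L.map_tsum hsum
    _ = ∑' k : ℕ, (((k.factorial : ℂ))⁻¹ * μ ^ k) • v := by
        refine tsum_congr fun k => ?_
        show (((k.factorial : ℂ))⁻¹ • M ^ k).mulVec v = _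
        rw [Matrix.smul_mulVec, hpow, smul_smul]
    _ = (∑' k : ℕ, ((k.factorial : ℂ))⁻¹ * μ ^ k) • v := Summable.tsum_smul_const hsum2 v
    _ = Complex.exp μ • v := by
        rw [Complex.exp_eq_exp_ℂ, exp_eq_tsum ℂ]
        simp [smul_eq_mul]

/-- The Hartley vectors `ψ_h` are eigenvectors of the continuous-time quantum walk
operator `exp((i t) • A)` on the Cayley graph of `ZMod N` with connection set `{u, -u}`,
with eigenvalue `exp(i t 2 cos(2π (u h).val / N))`. -/
theorem quantum_walk_hartley_eigen (N : ℕ) [NeZero N] (u : ZMod N) (hu : u ≠ -u)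
    (t : ℝ) (h : ZMod N) :
    (exp (((Complex.I * (t : ℂ)) • cayleyAdj N u :
        Matrix (ZMod N) (ZMod N) ℂ))).mulVec
        (fun g => ((cas (2 * Real.pi * (g * h).val / N) : ℝ) : ℂ)) =
      Complex.exp (Complex.I * t * (2 * Real.cos (2 * Real.pi * (u * h).val / N))) •
        (fun g => ((cas (2 * Real.pi * (g * h).val / N) : ℝ) : ℂ)) := by
  have hv := cayley_eigen N u hu h
  have hv' : ((Complex.I * (t : ℂ)) • cayleyAdj N u).mulVec
      (fun g => ((cas (2 * Real.pi * (g * h).val / N) : ℝ) : ℂ)) =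
      (Complex.I * t * (2 * Real.cos (2 * Real.pi * (u * h).val / N))) •
        (fun g => ((cas (2 * Real.pi * (g * h).val / N) : ℝ) : ℂ)) := by
    rw [Matrix.smul_mulVec, hv, smul_smul]
    push_cast
    ring_nf
  exact exp_mulVec_eigen _ _ _ hv'
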